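/- arXiv:1807.06145 — 4 statements merged into one kernel-verified Lean document; each statement's English description precedes it below -/
import Mathlib

section
/- (Ulam–Hyers stability of the non-delayed first-order equation, the special case y′(t) = F(t, y(t)) noted in the paper's final Remark.) Assume 0 < T·L < 1 and let ε ≥ 0. If y : [t₀, T] → ℝ is differentiable at every t ∈ [t₀, T] and |y′(t) − F(t, y(t))| ≤ ε for all t ∈ [t₀, T], then there exists a unique function y₀ : [t₀, T] → ℝ, differentiable at every t ∈ [t₀, T], such that y₀(t₀) = y(t₀), y₀′(t) = F(t, y₀(t)) for all t ∈ [t₀, T], and |y(t) − y₀(t)| ≤ εT/(1 − T·L) for all t ∈ [t₀, T]. -/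
open Set intervalIntegral MeasureTheory

namespace UlamAux

variable {t₀ T : ℝ}

/-- Extension to ℝ of the Picard operator applied to `u`. -/
noncomputable def ext (hT : t₀ ≤ T) (F : ℝ → ℝ → ℝ) (c : ℝ) (u : C(Icc t₀ T, ℝ)) : ℝ → ℝ :=
  fun t => c + ∫ s in t₀..t, F s (u (projIcc t₀ T hT s))

theorem ext_cont (hT : t₀ ≤ T) {F : ℝ → ℝ → ℝ}
    (hFcont : Continuous fun p : ℝ × ℝ => F p.1 p.2) (u : C(Icc t₀ T, ℝ)) :
    Continuous fun s => F s (u (projIcc t₀ T hT s)) :=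
  hFcont.comp (continuous_id.prodMk (u.continuous.comp continuous_projIcc))

theorem ext_hasDerivAt (hT : t₀ ≤ T) {F : ℝ → ℝ → ℝ}
    (hFcont : Continuous fun p : ℝ × ℝ => F p.1 p.2) (c : ℝ) (u : C(Icc t₀ T, ℝ)) (t : ℝ) :
    HasDerivAt (ext hT F c u) (F t (u (projIcc t₀ T hT t))) t :=
  (((ext_cont hT hFcont u).integral_hasStrictDerivAt t₀ t).hasDerivAt).const_add c

theorem ext_continuous (hT : t₀ ≤ T) {F : ℝ → ℝ → ℝ}
    (hFcont : Continuous fun p : ℝ × ℝ => F p.1 p.2) (c : ℝ) (u : C(Icc t₀ T, ℝ)) :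
    Continuous (ext hT F c u) := by
  rw [continuous_iff_continuousAt]
  exact fun t => (ext_hasDerivAt hT hFcont c u t).differentiableAt.continuousAt

/-- Picard operator. -/
noncomputable def P (hT : t₀ ≤ T) {F : ℝ → ℝ → ℝ}
    (hFcont : Continuous fun p : ℝ × ℝ => F p.1 p.2) (c : ℝ) (u : C(Icc t₀ T, ℝ)) :
    C(Icc t₀ T, ℝ) :=
  ⟨fun x => ext hT F c u x, (ext_continuous hT hFcont c u).comp continuous_subtype_val⟩

theorem P_apply (hT : t₀ ≤ T) {F : ℝ → ℝ → ℝ}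
    (hFcont : Continuous fun p : ℝ × ℝ => F p.1 p.2) (c : ℝ) (u : C(Icc t₀ T, ℝ))
    (x : Icc t₀ T) : P hT hFcont c u x = ext hT F c u x := rfl


theorem P_dist (ht₀ : 0 ≤ t₀) (hT : t₀ ≤ T) {F : ℝ → ℝ → ℝ}
    (hFcont : Continuous fun p : ℝ × ℝ => F p.1 p.2) {L : ℝ} (hL : 0 ≤ L)
    (hFlip : ∀ t x z : ℝ, |F t x - F t z| ≤ L * |x - z|) (c : ℝ) (u v : C(Icc t₀ T, ℝ)) :
    dist (P hT hFcont c u) (P hT hFcont c v) ≤ T * L * dist u v := by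
  refine (ContinuousMap.dist_le (mul_nonneg (mul_nonneg (ht₀.trans hT) hL) dist_nonneg)).2 fun x => ?_
  have h1 : IntervalIntegrable (fun s => F s (u (projIcc t₀ T hT s))) volume t₀ x :=
    (ext_cont hT hFcont u).intervalIntegrable _ _
  have h2 : IntervalIntegrable (fun s => F s (v (projIcc t₀ T hT s))) volume t₀ x :=
    (ext_cont hT hFcont v).intervalIntegrable _ _
  have key : (P hT hFcont c u x : ℝ) - P hT hFcont c v x
      = ∫ s in t₀..(x:ℝ),
          (F s (u (projIcc t₀ T hT s)) - F s (v (projIcc t₀ T hT s))) := by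
    rw [intervalIntegral.integral_sub h1 h2]
    simp only [P_apply, ext]; ring
  rw [Real.dist_eq, key]
  have hb : ∀ s ∈ Set.uIoc t₀ (x:ℝ),
      ‖F s (u (projIcc t₀ T hT s)) - F s (v (projIcc t₀ T hT s))‖ ≤ L * dist u v := by
    intro s _
    rw [Real.norm_eq_abs]
    refine (hFlip s _ _).trans (mul_le_mul_of_nonneg_left ?_ hL)
    rw [← Real.dist_eq]
    exact ContinuousMap.dist_apply_le_dist _
  have := intervalIntegral.norm_integral_le_of_norm_le_const hb
  rw [Real.norm_eq_abs] at this
  refine this.trans ?_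
  have hx : |(x:ℝ) - t₀| ≤ T := by
    rw [abs_of_nonneg (sub_nonneg.2 x.2.1)]
    linarith [x.2.2]
  nlinarith [mul_nonneg hL (dist_nonneg (x := u) (y := v)), abs_nonneg ((x:ℝ) - t₀)]

theorem sol_eq (hT : t₀ ≤ T) {F : ℝ → ℝ → ℝ}
    (hFcont : Continuous fun p : ℝ × ℝ => F p.1 p.2) (z : ℝ → ℝ)
    (hz : ∀ t ∈ Icc t₀ T, HasDerivAt z (F t (z t)) t) {t : ℝ} (ht : t ∈ Icc t₀ T) :
    z t = z t₀ + ∫ s in t₀..t, F s (z s) := by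
  have hzc : ContinuousOn z (Icc t₀ T) := fun s hs => (hz s hs).continuousAt.continuousWithinAt
  have hFz : ContinuousOn (fun s => F s (z s)) (Icc t₀ T) :=
    hFcont.comp_continuousOn (f := fun s => (s, z s)) (continuousOn_id.prodMk hzc)
  have hsub : uIcc t₀ t ⊆ Icc t₀ T := by
    rw [uIcc_of_le ht.1]
    exact Icc_subset_Icc le_rfl ht.2
  have := intervalIntegral.integral_eq_sub_of_hasDerivAt
    (f := z) (f' := fun s => F s (z s)) (fun s hs => hz s (hsub hs))
    ((hFz.mono hsub).intervalIntegrable)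
  rw [this]; ring

end UlamAux
/-- Ulam–Hyers stability of the non-delayed first-order equation
`y' t = F t (y t)` (special case noted in the final Remark of the paper). -/
theorem ulam_hyers_first_order
    (t₀ T : ℝ) (ht₀ : 0 ≤ t₀) (htT : t₀ < T)
    (L : ℝ) (hL : 0 < L)
    (F : ℝ → ℝ → ℝ)
    (hFcont : Continuous fun p : ℝ × ℝ => F p.1 p.2)
    (hFlip : ∀ t x z : ℝ, |F t x - F t z| ≤ L * |x - z|)
    (hcontr0 : 0 < T * L) (hcontr1 : T * L < 1)
    (ε : ℝ) (hε : 0 ≤ ε)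
    (y : ℝ → ℝ)
    (hydiff : ∀ t ∈ Icc t₀ T, DifferentiableAt ℝ y t)
    (hyineq : ∀ t ∈ Icc t₀ T, |deriv y t - F t (y t)| ≤ ε) :
    ∃ y₀ : ℝ → ℝ,
      (y₀ t₀ = y t₀ ∧
        (∀ t ∈ Icc t₀ T, HasDerivAt y₀ (F t (y₀ t)) t)) ∧
      (∀ t ∈ Icc t₀ T, |y t - y₀ t| ≤ ε * T / (1 - T * L)) ∧
      (∀ z : ℝ → ℝ, z t₀ = y t₀ →
        (∀ t ∈ Icc t₀ T, HasDerivAt z (F t (z t)) t) →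
        ∀ t ∈ Icc t₀ T, z t = y₀ t) := by
  have hT : t₀ ≤ T := htT.le
  have hL0 : 0 ≤ L := hL.le
  set c := y t₀ with hc
  set K : NNReal := ⟨T * L, hcontr0.le⟩ with hKdef
  have hPK : ContractingWith K (UlamAux.P hT hFcont c) := by
    constructor
    · exact_mod_cast hcontr1
    · apply LipschitzWith.of_dist_le_mul
      intro u v
      exact UlamAux.P_dist ht₀ hT hFcont hL0 hFlip c u v
  set u := ContractingWith.fixedPoint (UlamAux.P hT hFcont c) hPK with hu
  have hfix : UlamAux.P hT hFcont c u = u := hPK.fixedPoint_isFixedPt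
  have key : ∀ (t : ℝ) (ht : t ∈ Icc t₀ T), UlamAux.ext hT F c u t = u ⟨t, ht⟩ := by
    intro t ht
    conv_rhs => rw [← hfix]
    rfl
  -- continuity facts about y
  have hyc : ContinuousOn y (Icc t₀ T) := fun s hs => (hydiff s hs).continuousAt.continuousWithinAt
  have hFy : ContinuousOn (fun s => F s (y s)) (Icc t₀ T) :=
    hFcont.comp_continuousOn (f := fun s => (s, y s)) (continuousOn_id.prodMk hyc)
  refine ⟨UlamAux.ext hT F c u, ⟨?_, ?_⟩, ?_, ?_⟩
  · simp [UlamAux.ext]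
  · intro t ht
    have h := UlamAux.ext_hasDerivAt hT hFcont c u t
    rwa [projIcc_of_mem hT ht, ← key t ht] at h
  · -- stability
    set g : C(Icc t₀ T, ℝ) := ⟨fun x => y x, continuousOn_iff_continuous_restrict.1 hyc⟩ with hg
    have hgPg : dist g (UlamAux.P hT hFcont c g) ≤ ε * T := by
      refine (ContinuousMap.dist_le (mul_nonneg hε (ht₀.trans hT))).2 fun x => ?_
      have hx1 : t₀ ≤ (x : ℝ) := x.2.1
      have hx2 : (x : ℝ) ≤ T := x.2.2
      have hsub : uIcc t₀ (x : ℝ) ⊆ Icc t₀ T := by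
        rw [uIcc_of_le hx1]; exact Icc_subset_Icc le_rfl hx2
      have hΙ : Set.uIoc t₀ (x : ℝ) ⊆ Icc t₀ T := by
        rw [Set.uIoc_of_le hx1]
        exact Ioc_subset_Icc_self.trans (Icc_subset_Icc le_rfl hx2)
      have hFyInt : IntervalIntegrable (fun s => F s (y s)) volume t₀ x :=
        (hFy.mono hsub).intervalIntegrable
      have hdInt : IntervalIntegrable (fun s => deriv y s - F s (y s)) volume t₀ x := by
        apply IntervalIntegrable.mono_fun' (g := fun _ => ε) intervalIntegrable_const
        · rw [Set.uIoc_of_le hx1]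
          exact ((measurable_deriv y).aestronglyMeasurable.restrict).sub
            hFyInt.aestronglyMeasurable
        · filter_upwards [MeasureTheory.ae_restrict_mem measurableSet_uIoc] with s hs
          exact (hyineq s (hΙ hs)).trans_eq rfl
      have hderInt : IntervalIntegrable (deriv y) volume t₀ x := by
        have := hdInt.add hFyInt
        simpa using this
      have hFTC : ∫ s in t₀..(x:ℝ), deriv y s = y x - y t₀ :=
        intervalIntegral.integral_deriv_eq_sub (fun s hs => hydiff s (hsub hs)) hderInt
      have hcongr : ∫ s in t₀..(x:ℝ), F s (g (projIcc t₀ T hT s))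
          = ∫ s in t₀..(x:ℝ), F s (y s) := by
        apply intervalIntegral.integral_congr
        intro s hs
        show F s (g (projIcc t₀ T hT s)) = F s (y s)
        rw [projIcc_of_mem hT (hsub hs)]
        rfl
      have hrepr : (g x : ℝ) - UlamAux.P hT hFcont c g x
          = ∫ s in t₀..(x:ℝ), (deriv y s - F s (y s)) := by
        rw [intervalIntegral.integral_sub hderInt hFyInt, hFTC]
        show y x - (c + _) = _
        rw [hcongr]; ring
      rw [Real.dist_eq, hrepr]
      have hb : ∀ s ∈ Set.uIoc t₀ (x:ℝ), ‖deriv y s - F s (y s)‖ ≤ ε := fun s hs => hyineq s (hΙ hs)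
      have := intervalIntegral.norm_integral_le_of_norm_le_const hb
      rw [Real.norm_eq_abs] at this
      refine this.trans ?_
      have : |(x:ℝ) - t₀| ≤ T := by
        rw [abs_of_nonneg (sub_nonneg.2 hx1)]; linarith
      nlinarith
    have hgu : dist g u ≤ ε * T / (1 - T * L) := by
      have h2 : dist (UlamAux.P hT hFcont c g) (UlamAux.P hT hFcont c u) ≤ T * L * dist g u :=
        UlamAux.P_dist ht₀ hT hFcont hL0 hFlip c g u
      have h3 : dist g u ≤ dist g (UlamAux.P hT hFcont c g)
          + dist (UlamAux.P hT hFcont c g) (UlamAux.P hT hFcont c u) := by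
        conv_lhs => rw [← hfix]
        exact dist_triangle _ _ _
      rw [le_div_iff₀ (by linarith)]
      nlinarith
    intro t ht
    have : |y t - UlamAux.ext hT F c u t| = dist (g ⟨t, ht⟩) (u ⟨t, ht⟩) := by
      rw [key t ht, Real.dist_eq]
      rfl
    rw [this]
    exact (ContinuousMap.dist_apply_le_dist _).trans hgu
  · -- uniqueness
    intro z hz0 hz t ht
    have hzc : ContinuousOn z (Icc t₀ T) := fun s hs => (hz s hs).continuousAt.continuousWithinAt
    set h : C(Icc t₀ T, ℝ) := ⟨fun x => z x, continuousOn_iff_continuous_restrict.1 hzc⟩ with hh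
    have hfixh : UlamAux.P hT hFcont c h = h := by
      ext x
      have hx1 : t₀ ≤ (x : ℝ) := x.2.1
      have hsub : uIcc t₀ (x : ℝ) ⊆ Icc t₀ T := by
        rw [uIcc_of_le hx1]; exact Icc_subset_Icc le_rfl x.2.2
      have hcongr : ∫ s in t₀..(x:ℝ), F s (h (projIcc t₀ T hT s))
          = ∫ s in t₀..(x:ℝ), F s (z s) := by
        apply intervalIntegral.integral_congr
        intro s hs
        show F s (h (projIcc t₀ T hT s)) = F s (z s)
        rw [projIcc_of_mem hT (hsub hs)]
        rfl
      show c + _ = z x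
      rw [hcongr, show (c : ℝ) = z t₀ from hz0.symm]
      exact (UlamAux.sol_eq hT hFcont z hz x.2).symm
    have huh : h = u := hPK.fixedPoint_unique hfixh
    calc z t = h ⟨t, ht⟩ := rfl
      _ = u ⟨t, ht⟩ := by rw [huh]
      _ = UlamAux.ext hT F c u t := (key t ht).symm
end

section
/- (Strict contractivity of the Picard operator in the weighted generalized metric, from the proof of Theorem 2.) Assume additionally that φ₀ : I → ℝ is continuous, positive and nondecreasing, and that K > 0 satisfies (1/Γ(α)) ∫_{t₀}^{t} ψ′(u)(ψ(t) − ψ(u))^{α−1} φ₀(u) du ≤ K·φ₀(t) for all t ∈ [t₀, T]. Let φ, μ : I → ℝ be continuous with φ(t) = μ(t) = Φ(t) for all t ∈ [t₀ − a, t₀], and let M ≥ 0 be such that |φ(t) − μ(t)| ≤ M·φ₀(t) for all t ∈ I. Then |(Ωφ)(t) − (Ωμ)(t)| ≤ M·K(L₁ + L₂)·φ₀(t) for all t ∈ I. -/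
open Set intervalIntegral

/-- Strict contractivity of the Picard operator `Ω` of the ψ-Hilfer fractional
delay equation, in the weighted generalized metric (from the proof of
Theorem 2 of the paper). -/
theorem picard_operator_contractive_weighted
    (t₀ T a : ℝ) (htT : t₀ < T) (ha : 0 < a)
    (ψ : ℝ → ℝ) (hψC : ContDiff ℝ 1 ψ) (hψmono : StrictMono ψ)
    (hψ' : ∀ t ∈ Icc t₀ T, 0 < deriv ψ t)
    (α β γ : ℝ) (hα0 : 0 < α) (hα1 : α ≤ 1) (hβ0 : 0 ≤ β) (hβ1 : β ≤ 1)
    (hγ : γ = α + β * (1 - α))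
    (L₁ L₂ : ℝ) (hL₁ : 0 < L₁) (hL₂ : 0 < L₂)
    (F : ℝ → ℝ → ℝ → ℝ)
    (hFcont : Continuous fun p : ℝ × ℝ × ℝ => F p.1 p.2.1 p.2.2)
    (hFlip : ∀ t x y z w : ℝ, |F t x y - F t z w| ≤ L₁ * |x - z| + L₂ * |y - w|)
    (Φ : ℝ → ℝ) (hΦ : ContinuousOn Φ (Icc (t₀ - a) t₀))
    (φ₀ : ℝ → ℝ) (hφ₀cont : ContinuousOn φ₀ (Icc (t₀ - a) T))
    (hφ₀pos : ∀ t ∈ Icc (t₀ - a) T, 0 < φ₀ t)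
    (hφ₀mono : MonotoneOn φ₀ (Icc (t₀ - a) T))
    (K : ℝ) (hK : 0 < K)
    (hKint : ∀ t ∈ Icc t₀ T,
      (1 / Real.Gamma α) *
          ∫ u in t₀..t, deriv ψ u * (ψ t - ψ u) ^ (α - 1) * φ₀ u ≤ K * φ₀ t)
    (φ μ : ℝ → ℝ)
    (hφcont : ContinuousOn φ (Icc (t₀ - a) T)) (hμcont : ContinuousOn μ (Icc (t₀ - a) T))
    (hφΦ : ∀ t ∈ Icc (t₀ - a) t₀, φ t = Φ t) (hμΦ : ∀ t ∈ Icc (t₀ - a) t₀, μ t = Φ t)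
    (M : ℝ) (hM : 0 ≤ M)
    (hMbound : ∀ t ∈ Icc (t₀ - a) T, |φ t - μ t| ≤ M * φ₀ t)
    (Ωφ Ωμ : ℝ → ℝ)
    (hΩφ₁ : ∀ t ∈ Icc (t₀ - a) t₀, Ωφ t = Φ t)
    (hΩφ₂ : ∀ t ∈ Ioc t₀ T,
      Ωφ t = (ψ t - ψ t₀) ^ (1 - γ) / Real.Gamma γ * Φ t₀ +
        (1 / Real.Gamma α) *
          ∫ u in t₀..t, deriv ψ u * (ψ t - ψ u) ^ (α - 1) * F u (φ u) (φ (u - a)))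
    (hΩμ₁ : ∀ t ∈ Icc (t₀ - a) t₀, Ωμ t = Φ t)
    (hΩμ₂ : ∀ t ∈ Ioc t₀ T,
      Ωμ t = (ψ t - ψ t₀) ^ (1 - γ) / Real.Gamma γ * Φ t₀ +
        (1 / Real.Gamma α) *
          ∫ u in t₀..t, deriv ψ u * (ψ t - ψ u) ^ (α - 1) * F u (μ u) (μ (u - a))) :
    ∀ t ∈ Icc (t₀ - a) T, |Ωφ t - Ωμ t| ≤ M * (K * (L₁ + L₂)) * φ₀ t := by
  intro t ht
  obtain ⟨ht1, ht2⟩ := ht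
  have hΓα : 0 < Real.Gamma α := Real.Gamma_pos_of_pos hα0
  have hrhs_nonneg : 0 ≤ M * (K * (L₁ + L₂)) * φ₀ t := by
    have h := hφ₀pos t ⟨ht1, ht2⟩
    positivity
  rcases le_or_gt t t₀ with hle | hlt
  · rw [hΩφ₁ t ⟨ht1, hle⟩, hΩμ₁ t ⟨ht1, hle⟩, sub_self, abs_zero]
    exact hrhs_nonneg
  · set w : ℝ → ℝ := fun u => deriv ψ u * (ψ t - ψ u) ^ (α - 1) with hwdef
    have hψdiff : Differentiable ℝ ψ := hψC.differentiable one_ne_zero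
    have huIcc : uIcc t₀ t = Icc t₀ t := uIcc_of_le hlt.le
    have hsub : Icc t₀ t ⊆ Icc (t₀ - a) T := fun x hx =>
      ⟨le_trans (by linarith) hx.1, hx.2.trans ht2⟩
    -- w is interval integrable
    have hwInt : IntervalIntegrable w MeasureTheory.volume t₀ t := by
      have hG : ∀ u ∈ Ioo (min t₀ t) (max t₀ t),
          HasDerivAt (fun u => -(ψ t - ψ u) ^ α / α) (w u) u := by
        intro u hu
        rw [min_eq_left hlt.le, max_eq_right hlt.le] at hu
        have hbase : 0 < ψ t - ψ u := sub_pos.mpr (hψmono hu.2)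
        have h1 : HasDerivAt (fun u => ψ t - ψ u) (-(deriv ψ u)) u :=
          (hψdiff u).hasDerivAt.const_sub (ψ t)
        have h2 : HasDerivAt (fun x : ℝ => x ^ α) (α * (ψ t - ψ u) ^ (α - 1)) (ψ t - ψ u) :=
          Real.hasDerivAt_rpow_const (Or.inl hbase.ne')
        have h3 := (h2.comp u h1).neg.div_const α
        rw [show w u = -(α * (ψ t - ψ u) ^ (α - 1) * -deriv ψ u) / α by
          simp only [hwdef]; field_simp]
        exact h3
      have hGcont : ContinuousOn (fun u => -(ψ t - ψ u) ^ α / α) (uIcc t₀ t) := by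
        apply ContinuousOn.div_const
        apply ContinuousOn.neg
        apply ContinuousOn.rpow_const
        · exact (continuous_const.sub hψC.continuous).continuousOn
        · intro x _; exact Or.inr hα0.le
      have hwpos : ∀ u ∈ Ioo (min t₀ t) (max t₀ t), 0 ≤ w u := by
        intro u hu
        rw [min_eq_left hlt.le, max_eq_right hlt.le] at hu
        exact mul_nonneg (hψ' u ⟨hu.1.le, hu.2.le.trans ht2⟩).le
          (Real.rpow_nonneg (sub_nonneg.mpr (hψmono.monotone hu.2.le)) _)
      exact intervalIntegrable_deriv_of_nonneg hGcont hG hwpos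
    -- w nonneg on the closed interval
    have hwnn : ∀ u ∈ Icc t₀ t, 0 ≤ w u := fun u hu =>
      mul_nonneg (hψ' u ⟨hu.1, hu.2.trans ht2⟩).le
        (Real.rpow_nonneg (sub_nonneg.mpr (hψmono.monotone hu.2)) _)
    -- continuity of the F-compositions
    have hmap : ∀ u ∈ Icc t₀ t, u - a ∈ Icc (t₀ - a) T := fun u hu =>
      ⟨by linarith [hu.1], by linarith [hu.2, ht2]⟩
    have hcomp : ∀ g : ℝ → ℝ, ContinuousOn g (Icc (t₀ - a) T) →
        ContinuousOn (fun u => F u (g u) (g (u - a))) (Icc t₀ t) := by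
      intro g hg
      have h1 : ContinuousOn (fun u => g u) (Icc t₀ t) := hg.mono hsub
      have h2 : ContinuousOn (fun u => g (u - a)) (Icc t₀ t) :=
        hg.comp (continuous_id.sub continuous_const).continuousOn hmap
      exact hFcont.comp_continuousOn (continuousOn_id.prodMk (h1.prodMk h2))
    have hφF := hcomp φ hφcont
    have hμF := hcomp μ hμcont
    have hfφInt : IntervalIntegrable (fun u => w u * F u (φ u) (φ (u - a)))
        MeasureTheory.volume t₀ t := hwInt.mul_continuousOn (huIcc ▸ hφF)
    have hfμInt : IntervalIntegrable (fun u => w u * F u (μ u) (μ (u - a)))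
        MeasureTheory.volume t₀ t := hwInt.mul_continuousOn (huIcc ▸ hμF)
    have hφ₀' : ContinuousOn φ₀ (Icc t₀ t) := hφ₀cont.mono hsub
    have hgInt : IntervalIntegrable (fun u => w u * φ₀ u) MeasureTheory.volume t₀ t :=
      hwInt.mul_continuousOn (huIcc ▸ hφ₀')
    have hgInt' : IntervalIntegrable (fun u => M * (L₁ + L₂) * (w u * φ₀ u))
        MeasureTheory.volume t₀ t := hgInt.const_mul _
    -- the difference
    have hdiff : Ωφ t - Ωμ t = (1 / Real.Gamma α) *
        ∫ u in t₀..t, (w u * F u (φ u) (φ (u - a)) - w u * F u (μ u) (μ (u - a))) := by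
      rw [hΩφ₂ t ⟨hlt, ht2⟩, hΩμ₂ t ⟨hlt, ht2⟩,
        intervalIntegral.integral_sub hfφInt hfμInt]
      ring
    have habs : ∀ u ∈ Icc t₀ t,
        |w u * F u (φ u) (φ (u - a)) - w u * F u (μ u) (μ (u - a))| ≤
          M * (L₁ + L₂) * (w u * φ₀ u) := by
      intro u hu
      have hwn := hwnn u hu
      have hu1 : u ∈ Icc (t₀ - a) T := hsub hu
      have hu2 : u - a ∈ Icc (t₀ - a) T := hmap u hu
      have hφ₀u : 0 < φ₀ u := hφ₀pos u hu1
      have hφ₀ua : φ₀ (u - a) ≤ φ₀ u := hφ₀mono hu2 hu1 (by linarith)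
      have hF := hFlip u (φ u) (φ (u - a)) (μ u) (μ (u - a))
      have hb1 := hMbound u hu1
      have hb2 := hMbound (u - a) hu2
      calc |w u * F u (φ u) (φ (u - a)) - w u * F u (μ u) (μ (u - a))|
          = w u * |F u (φ u) (φ (u - a)) - F u (μ u) (μ (u - a))| := by
            rw [← mul_sub, abs_mul, abs_of_nonneg hwn]
        _ ≤ w u * (L₁ * (M * φ₀ u) + L₂ * (M * φ₀ (u - a))) := by
            apply mul_le_mul_of_nonneg_left _ hwn
            refine hF.trans (add_le_add ?_ ?_)
            · exact mul_le_mul_of_nonneg_left hb1 hL₁.le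
            · exact mul_le_mul_of_nonneg_left hb2 hL₂.le
        _ ≤ w u * (L₁ * (M * φ₀ u) + L₂ * (M * φ₀ u)) := by
            apply mul_le_mul_of_nonneg_left _ hwn
            have : M * φ₀ (u - a) ≤ M * φ₀ u := mul_le_mul_of_nonneg_left hφ₀ua hM
            nlinarith [hL₂.le]
        _ = M * (L₁ + L₂) * (w u * φ₀ u) := by ring
    have key : |∫ u in t₀..t, (w u * F u (φ u) (φ (u - a)) - w u * F u (μ u) (μ (u - a)))| ≤
        M * (L₁ + L₂) * ∫ u in t₀..t, w u * φ₀ u := by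
      calc |∫ u in t₀..t, (w u * F u (φ u) (φ (u - a)) - w u * F u (μ u) (μ (u - a)))|
          ≤ ∫ u in t₀..t, |w u * F u (φ u) (φ (u - a)) - w u * F u (μ u) (μ (u - a))| :=
            intervalIntegral.abs_integral_le_integral_abs hlt.le
        _ ≤ ∫ u in t₀..t, M * (L₁ + L₂) * (w u * φ₀ u) :=
            intervalIntegral.integral_mono_on hlt.le ((hfφInt.sub hfμInt).abs) hgInt' habs
        _ = M * (L₁ + L₂) * ∫ u in t₀..t, w u * φ₀ u := by
            rw [intervalIntegral.integral_const_mul]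
    have hKt := hKint t ⟨hlt.le, ht2⟩
    have hKt' : (1 / Real.Gamma α) * ∫ u in t₀..t, w u * φ₀ u ≤ K * φ₀ t := hKt
    calc |Ωφ t - Ωμ t|
        = (1 / Real.Gamma α) *
            |∫ u in t₀..t, (w u * F u (φ u) (φ (u - a)) - w u * F u (μ u) (μ (u - a)))| := by
          rw [hdiff, abs_mul, abs_of_nonneg (by positivity : (0:ℝ) ≤ 1 / Real.Gamma α)]
      _ ≤ (1 / Real.Gamma α) * (M * (L₁ + L₂) * ∫ u in t₀..t, w u * φ₀ u) :=
          mul_le_mul_of_nonneg_left key (by positivity)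
      _ = M * (L₁ + L₂) * ((1 / Real.Gamma α) * ∫ u in t₀..t, w u * φ₀ u) := by ring
      _ ≤ M * (L₁ + L₂) * (K * φ₀ t) :=
          mul_le_mul_of_nonneg_left hKt' (by positivity)
      _ = M * (K * (L₁ + L₂)) * φ₀ t := by ring
end

section
/- (Strict contractivity of the Picard operator in the uniform metric, from the proof of Theorem 3.) Let φ, μ : I → ℝ be continuous with φ(t) = μ(t) = Φ(t) for all t ∈ [t₀ − a, t₀], and let M ≥ 0 be such that |φ(t) − μ(t)| ≤ M for all t ∈ I. Then |(Ωφ)(t) − (Ωμ)(t)| ≤ M·(L₁ + L₂)·(ψ(T) − ψ(t₀))^α / Γ(α + 1) for all t ∈ I. -/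
open Set intervalIntegral

/-- Strict contractivity of the Picard operator `Ω` of the ψ-Hilfer fractional
delay equation, in the uniform metric (from the proof of Theorem 3 of the
paper). -/
theorem picard_operator_contractive_uniform
    (t₀ T a : ℝ) (htT : t₀ < T) (ha : 0 < a)
    (ψ : ℝ → ℝ) (hψC : ContDiff ℝ 1 ψ) (hψmono : StrictMono ψ)
    (hψ' : ∀ t ∈ Icc t₀ T, 0 < deriv ψ t)
    (α β γ : ℝ) (hα0 : 0 < α) (hα1 : α ≤ 1) (hβ0 : 0 ≤ β) (hβ1 : β ≤ 1)
    (hγ : γ = α + β * (1 - α))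
    (L₁ L₂ : ℝ) (hL₁ : 0 < L₁) (hL₂ : 0 < L₂)
    (F : ℝ → ℝ → ℝ → ℝ)
    (hFcont : Continuous fun p : ℝ × ℝ × ℝ => F p.1 p.2.1 p.2.2)
    (hFlip : ∀ t x y z w : ℝ, |F t x y - F t z w| ≤ L₁ * |x - z| + L₂ * |y - w|)
    (Φ : ℝ → ℝ) (hΦ : ContinuousOn Φ (Icc (t₀ - a) t₀))
    (φ μ : ℝ → ℝ)
    (hφcont : ContinuousOn φ (Icc (t₀ - a) T)) (hμcont : ContinuousOn μ (Icc (t₀ - a) T))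
    (hφΦ : ∀ t ∈ Icc (t₀ - a) t₀, φ t = Φ t) (hμΦ : ∀ t ∈ Icc (t₀ - a) t₀, μ t = Φ t)
    (M : ℝ) (hM : 0 ≤ M)
    (hMbound : ∀ t ∈ Icc (t₀ - a) T, |φ t - μ t| ≤ M)
    (Ωφ Ωμ : ℝ → ℝ)
    (hΩφ₁ : ∀ t ∈ Icc (t₀ - a) t₀, Ωφ t = Φ t)
    (hΩφ₂ : ∀ t ∈ Ioc t₀ T,
      Ωφ t = (ψ t - ψ t₀) ^ (1 - γ) / Real.Gamma γ * Φ t₀ +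
        (1 / Real.Gamma α) *
          ∫ u in t₀..t, deriv ψ u * (ψ t - ψ u) ^ (α - 1) * F u (φ u) (φ (u - a)))
    (hΩμ₁ : ∀ t ∈ Icc (t₀ - a) t₀, Ωμ t = Φ t)
    (hΩμ₂ : ∀ t ∈ Ioc t₀ T,
      Ωμ t = (ψ t - ψ t₀) ^ (1 - γ) / Real.Gamma γ * Φ t₀ +
        (1 / Real.Gamma α) *
          ∫ u in t₀..t, deriv ψ u * (ψ t - ψ u) ^ (α - 1) * F u (μ u) (μ (u - a))) :
    ∀ t ∈ Icc (t₀ - a) T,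
      |Ωφ t - Ωμ t| ≤ M * (L₁ + L₂) * (ψ T - ψ t₀) ^ α / Real.Gamma (α + 1) := by
  intro t ht
  have hΓα : 0 < Real.Gamma α := Real.Gamma_pos_of_pos hα0
  have hΓα1 : 0 < Real.Gamma (α + 1) := Real.Gamma_pos_of_pos (by linarith)
  have hψTt₀ : 0 ≤ ψ T - ψ t₀ := sub_nonneg.mpr (hψmono.le_iff_le.mpr htT.le)
  have hRHS : 0 ≤ M * (L₁ + L₂) * (ψ T - ψ t₀) ^ α / Real.Gamma (α + 1) := by
    apply div_nonneg _ hΓα1.le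
    exact mul_nonneg (mul_nonneg hM (by linarith)) (Real.rpow_nonneg hψTt₀ _)
  rcases le_or_gt t t₀ with hle | h
  · have h1 : t ∈ Icc (t₀ - a) t₀ := ⟨ht.1, hle⟩
    rw [hΩφ₁ t h1, hΩμ₁ t h1, sub_self, abs_zero]
    exact hRHS
  -- main case : t₀ < t ≤ T
  have htT' : t ∈ Ioc t₀ T := ⟨h, ht.2⟩
  have hψ'cont : Continuous (deriv ψ) := hψC.continuous_deriv le_rfl
  have hψdiff : Differentiable ℝ ψ := hψC.differentiable one_ne_zero
  obtain ⟨cm, hcm, hcmmin⟩ :=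
    isCompact_Icc.exists_isMinOn (nonempty_Icc.mpr htT.le) hψ'cont.continuousOn
  obtain ⟨cM, hcM, hcMmax⟩ :=
    isCompact_Icc.exists_isMaxOn (nonempty_Icc.mpr htT.le) hψ'cont.continuousOn
  have hm : 0 < deriv ψ cm := hψ' cm hcm
  have hMψ : 0 < deriv ψ cM := hψ' cM hcM
  have hmle : ∀ x ∈ Icc t₀ T, deriv ψ cm ≤ deriv ψ x := fun x hx => hcmmin hx
  have hMle : ∀ x ∈ Icc t₀ T, deriv ψ x ≤ deriv ψ cM := fun x hx => hcMmax hx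
  -- slope estimate
  have hslope : ∀ u ∈ Ico t₀ t, deriv ψ cm * (t - u) ≤ ψ t - ψ u := by
    intro u hu
    obtain ⟨c, hc, hceq⟩ := exists_hasDerivAt_eq_slope ψ (deriv ψ) hu.2
      hψdiff.continuous.continuousOn (fun x _ => (hψdiff x).hasDerivAt)
    have hc' : c ∈ Icc t₀ T := ⟨hu.1.trans hc.1.le, hc.2.le.trans htT'.2⟩
    have hmc := hmle c hc'
    have hpos : 0 < t - u := sub_pos.mpr hu.2
    rw [hceq] at hmc
    calc deriv ψ cm * (t - u) ≤ (ψ t - ψ u) / (t - u) * (t - u) :=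
          mul_le_mul_of_nonneg_right hmc hpos.le
      _ = ψ t - ψ u := div_mul_cancel₀ _ hpos.ne'
  have hKnonneg : ∀ u ∈ Icc t₀ t, 0 ≤ deriv ψ u * (ψ t - ψ u) ^ (α - 1) := fun u hu =>
    mul_nonneg (hψ' u ⟨hu.1, hu.2.trans htT'.2⟩).le
      (Real.rpow_nonneg (sub_nonneg.mpr (hψmono.le_iff_le.mpr hu.2)) _)
  -- dominating function is interval integrable
  have hDint : IntervalIntegrable
      (fun u => deriv ψ cM * (deriv ψ cm ^ (α - 1) * (t - u) ^ (α - 1))) MeasureTheory.volume t₀ t := by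
    have h1 : IntervalIntegrable (fun x : ℝ => x ^ (α - 1)) MeasureTheory.volume (t - t₀) (t - t) :=
      intervalIntegrable_rpow' (by linarith)
    have h2 := h1.comp_sub_left t
    simp only [sub_sub_cancel, sub_self, sub_zero] at h2
    exact (h2.const_mul _).const_mul _
  -- a.e. measurability of the kernel
  have hKmeas : MeasureTheory.AEStronglyMeasurable (fun u => deriv ψ u * (ψ t - ψ u) ^ (α - 1))
      (MeasureTheory.volume.restrict (uIoc t₀ t)) := by
    rw [uIoc_of_le h.le, ← MeasureTheory.Measure.restrict_congr_set MeasureTheory.Ioo_ae_eq_Ioc]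
    refine ContinuousOn.aestronglyMeasurable ?_ measurableSet_Ioo
    refine hψ'cont.continuousOn.mul (ContinuousOn.rpow_const
      ((continuous_const.sub hψdiff.continuous).continuousOn) ?_)
    intro x hx
    exact Or.inl (sub_ne_zero.mpr (hψmono hx.2).ne')
  have hne_ae : ∀ᵐ u ∂(MeasureTheory.volume.restrict (Ioc t₀ t)), u ≠ t := by
    refine MeasureTheory.ae_restrict_of_ae ?_
    have hset : {u : ℝ | ¬ u ≠ t} = {t} := by ext u; simp
    rw [MeasureTheory.ae_iff, hset]
    exact MeasureTheory.measure_singleton t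
  -- kernel is interval integrable by comparison
  have hKint : IntervalIntegrable (fun u => deriv ψ u * (ψ t - ψ u) ^ (α - 1)) MeasureTheory.volume t₀ t := by
    refine hDint.mono_fun hKmeas ?_
    rw [uIoc_of_le h.le]
    filter_upwards [MeasureTheory.ae_restrict_mem measurableSet_Ioc, hne_ae] with u hu hune
    have hu' : u ∈ Ioo t₀ t := ⟨hu.1, lt_of_le_of_ne hu.2 hune⟩
    have huI : u ∈ Icc t₀ T := ⟨hu'.1.le, hu'.2.le.trans htT'.2⟩
    have hpos : 0 < t - u := sub_pos.mpr hu'.2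
    have hrp : (ψ t - ψ u) ^ (α - 1) ≤ deriv ψ cm ^ (α - 1) * (t - u) ^ (α - 1) := by
      have h5 := Real.rpow_le_rpow_of_nonpos (mul_pos hm hpos)
        (hslope u ⟨hu'.1.le, hu'.2⟩) (by linarith : α - 1 ≤ 0)
      rwa [Real.mul_rpow hm.le hpos.le] at h5
    have hKn : 0 ≤ deriv ψ u * (ψ t - ψ u) ^ (α - 1) :=
      hKnonneg u ⟨hu'.1.le, hu'.2.le⟩
    simp only [Real.norm_eq_abs]
    rw [abs_of_nonneg hKn]
    refine le_trans ?_ (le_abs_self _)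
    exact mul_le_mul (hMle u huI) hrp
      (Real.rpow_nonneg (sub_nonneg.mpr (hψmono hu'.2).le) _) hMψ.le
  -- value of the integral of the kernel
  have hKval : (∫ u in t₀..t, deriv ψ u * (ψ t - ψ u) ^ (α - 1)) = (ψ t - ψ t₀) ^ α / α := by
    have hGcont : ContinuousOn (fun u => -((ψ t - ψ u) ^ α) / α) (Icc t₀ t) := by
      refine ContinuousOn.div_const (ContinuousOn.neg ?_) α
      exact ContinuousOn.rpow_const ((continuous_const.sub hψdiff.continuous).continuousOn)
        (fun x _ => Or.inr hα0.le)
    have hG : ∀ x ∈ Ioo t₀ t, HasDerivWithinAt (fun u => -((ψ t - ψ u) ^ α) / α)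
        (deriv ψ x * (ψ t - ψ x) ^ (α - 1)) (Ioi x) x := by
      intro x hx
      have h1 : HasDerivAt (fun u => ψ t - ψ u) (-deriv ψ x) x :=
        (hψdiff x).hasDerivAt.const_sub (ψ t)
      have h2 : HasDerivAt (fun u => (ψ t - ψ u) ^ α)
          (-deriv ψ x * α * (ψ t - ψ x) ^ (α - 1)) x :=
        h1.rpow_const (Or.inl (sub_ne_zero.mpr (hψmono hx.2).ne'))
      have h3 : HasDerivAt (fun u => -((ψ t - ψ u) ^ α) / α)
          (deriv ψ x * (ψ t - ψ x) ^ (α - 1)) x := by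
        have h4 := h2.neg.div_const α
        refine h4.congr_deriv ?_
        rw [div_eq_iff hα0.ne']
        ring
      exact h3.hasDerivWithinAt
    have hFTC := intervalIntegral.integral_eq_sub_of_hasDeriv_right_of_le h.le hGcont hG hKint
    rw [hFTC, sub_self, Real.zero_rpow hα0.ne']
    ring
  -- continuity of the composed nonlinearities
  have hsub1 : ∀ u ∈ Icc t₀ t, u ∈ Icc (t₀ - a) T := fun u hu =>
    ⟨by linarith [hu.1], hu.2.trans htT'.2⟩
  have hsub2 : ∀ u ∈ Icc t₀ t, u - a ∈ Icc (t₀ - a) T := fun u hu =>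
    ⟨by linarith [hu.1], by linarith [hu.2, htT'.2]⟩
  have hpairφ : ContinuousOn (fun u : ℝ => (u, φ u, φ (u - a))) (Icc t₀ t) := by
    refine continuousOn_id.prodMk (ContinuousOn.prodMk ?_ ?_)
    · exact hφcont.comp continuousOn_id hsub1
    · exact hφcont.comp ((continuous_id.sub continuous_const).continuousOn)
        (fun u hu => hsub2 u hu)
  have hpairμ : ContinuousOn (fun u : ℝ => (u, μ u, μ (u - a))) (Icc t₀ t) := by
    refine continuousOn_id.prodMk (ContinuousOn.prodMk ?_ ?_)
    · exact hμcont.comp continuousOn_id hsub1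
    · exact hμcont.comp ((continuous_id.sub continuous_const).continuousOn)
        (fun u hu => hsub2 u hu)
  have hFφcont : ContinuousOn (fun u => F u (φ u) (φ (u - a))) (Icc t₀ t) :=
    hFcont.comp_continuousOn hpairφ
  have hFμcont : ContinuousOn (fun u => F u (μ u) (μ (u - a))) (Icc t₀ t) :=
    hFcont.comp_continuousOn hpairμ
  -- interval integrability of the full integrands
  have hfφ : IntervalIntegrable
      (fun u => deriv ψ u * (ψ t - ψ u) ^ (α - 1) * F u (φ u) (φ (u - a))) MeasureTheory.volume t₀ t :=
    hKint.mul_continuousOn (by rw [uIcc_of_le h.le]; exact hFφcont)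
  have hfμ : IntervalIntegrable
      (fun u => deriv ψ u * (ψ t - ψ u) ^ (α - 1) * F u (μ u) (μ (u - a))) MeasureTheory.volume t₀ t :=
    hKint.mul_continuousOn (by rw [uIcc_of_le h.le]; exact hFμcont)
  -- main estimate
  rw [hΩφ₂ t htT', hΩμ₂ t htT']
  have hsplit : (ψ t - ψ t₀) ^ (1 - γ) / Real.Gamma γ * Φ t₀ +
        (1 / Real.Gamma α) *
          (∫ u in t₀..t, deriv ψ u * (ψ t - ψ u) ^ (α - 1) * F u (φ u) (φ (u - a))) -
      ((ψ t - ψ t₀) ^ (1 - γ) / Real.Gamma γ * Φ t₀ +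
        (1 / Real.Gamma α) *
          (∫ u in t₀..t, deriv ψ u * (ψ t - ψ u) ^ (α - 1) * F u (μ u) (μ (u - a)))) =
      (1 / Real.Gamma α) *
        ((∫ u in t₀..t, deriv ψ u * (ψ t - ψ u) ^ (α - 1) * F u (φ u) (φ (u - a))) -
         (∫ u in t₀..t, deriv ψ u * (ψ t - ψ u) ^ (α - 1) * F u (μ u) (μ (u - a)))) := by
    ring
  rw [hsplit, ← intervalIntegral.integral_sub hfφ hfμ, abs_mul,
    abs_of_nonneg (by positivity : (0:ℝ) ≤ 1 / Real.Gamma α)]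
  have h1 : |∫ u in t₀..t, (deriv ψ u * (ψ t - ψ u) ^ (α - 1) * F u (φ u) (φ (u - a)) -
        deriv ψ u * (ψ t - ψ u) ^ (α - 1) * F u (μ u) (μ (u - a)))| ≤
      ∫ u in t₀..t, |deriv ψ u * (ψ t - ψ u) ^ (α - 1) * F u (φ u) (φ (u - a)) -
        deriv ψ u * (ψ t - ψ u) ^ (α - 1) * F u (μ u) (μ (u - a))| :=
    intervalIntegral.abs_integral_le_integral_abs h.le
  have h2 : (∫ u in t₀..t, |deriv ψ u * (ψ t - ψ u) ^ (α - 1) * F u (φ u) (φ (u - a)) -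
        deriv ψ u * (ψ t - ψ u) ^ (α - 1) * F u (μ u) (μ (u - a))|) ≤
      ∫ u in t₀..t, deriv ψ u * (ψ t - ψ u) ^ (α - 1) * (M * (L₁ + L₂)) := by
    refine intervalIntegral.integral_mono_on h.le ((hfφ.sub hfμ).abs)
      (hKint.mul_const _) ?_
    intro u hu
    rw [← mul_sub, abs_mul, abs_of_nonneg (hKnonneg u hu)]
    refine mul_le_mul_of_nonneg_left ?_ (hKnonneg u hu)
    calc |F u (φ u) (φ (u - a)) - F u (μ u) (μ (u - a))| ≤
          L₁ * |φ u - μ u| + L₂ * |φ (u - a) - μ (u - a)| := hFlip u _ _ _ _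
      _ ≤ L₁ * M + L₂ * M := add_le_add
          (mul_le_mul_of_nonneg_left (hMbound u (hsub1 u hu)) hL₁.le)
          (mul_le_mul_of_nonneg_left (hMbound _ (hsub2 u hu)) hL₂.le)
      _ = M * (L₁ + L₂) := by ring
  have h3 : (∫ u in t₀..t, deriv ψ u * (ψ t - ψ u) ^ (α - 1) * (M * (L₁ + L₂))) =
      (ψ t - ψ t₀) ^ α / α * (M * (L₁ + L₂)) := by
    rw [intervalIntegral.integral_mul_const, hKval]
  have h4 : (ψ t - ψ t₀) ^ α ≤ (ψ T - ψ t₀) ^ α := by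
    refine Real.rpow_le_rpow (sub_nonneg.mpr (hψmono.le_iff_le.mpr h.le)) ?_ hα0.le
    have := hψmono.le_iff_le.mpr htT'.2
    linarith
  have hΓ1 : Real.Gamma (α + 1) = α * Real.Gamma α := Real.Gamma_add_one hα0.ne'
  calc (1 / Real.Gamma α) * |∫ u in t₀..t,
        (deriv ψ u * (ψ t - ψ u) ^ (α - 1) * F u (φ u) (φ (u - a)) -
         deriv ψ u * (ψ t - ψ u) ^ (α - 1) * F u (μ u) (μ (u - a)))| ≤
      (1 / Real.Gamma α) * ((ψ t - ψ t₀) ^ α / α * (M * (L₁ + L₂))) := by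
        refine mul_le_mul_of_nonneg_left ?_ (by positivity)
        exact le_trans h1 (le_trans h2 (le_of_eq h3))
    _ ≤ (1 / Real.Gamma α) * ((ψ T - ψ t₀) ^ α / α * (M * (L₁ + L₂))) := by
        refine mul_le_mul_of_nonneg_left ?_ (by positivity)
        refine mul_le_mul_of_nonneg_right ?_ (by positivity)
        exact div_le_div_of_nonneg_right h4 hα0.le
    _ = M * (L₁ + L₂) * (ψ T - ψ t₀) ^ α / Real.Gamma (α + 1) := by
        rw [hΓ1]
        field_simp
end

section
/- (Continuity of the ψ-Riemann–Liouville fractional integral of a continuous function, asserted in the proof of Theorem 2.) Let g : [t₀, T] → ℝ be continuous. Then the function G : [t₀, T] → ℝ defined by G(t) = (1/Γ(α)) ∫_{t₀}^{t} ψ′(u)(ψ(t) − ψ(u))^{α−1} g(u) du (with G(t₀) = 0) is continuous on [t₀, T]. -/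
open Set intervalIntegral

open MeasureTheory

open scoped Interval

lemma aux_slope (t₀ T m : ℝ) (ψ : ℝ → ℝ) (hψC : ContDiff ℝ 1 ψ)
    (hm : ∀ x ∈ Icc t₀ T, m ≤ deriv ψ x) :
    ∀ u ∈ Icc t₀ T, ∀ t ∈ Icc t₀ T, u ≤ t → m * (t - u) ≤ ψ t - ψ u := by
  intro u hu t ht hut
  rcases eq_or_lt_of_le hut with rfl | hlt
  · simp
  · obtain ⟨c, hc, hc'⟩ := exists_deriv_eq_slope ψ hlt (hψC.continuous.continuousOn)
      ((hψC.differentiable one_ne_zero).differentiableOn)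
    have hcI : c ∈ Icc t₀ T := ⟨hu.1.trans hc.1.le, hc.2.le.trans ht.2⟩
    have := hm c hcI
    rw [hc'] at this
    have h2 : m * (t - u) ≤ (ψ t - ψ u) / (t - u) * (t - u) := by
      apply mul_le_mul_of_nonneg_right this (by linarith)
    rwa [div_mul_cancel₀] at h2
    linarith

lemma aux_integrable (t₀ T m M₁ M α : ℝ) (hm0 : 0 < m) (hα0 : 0 < α) (hα1 : α ≤ 1)
    (ψ h : ℝ → ℝ) (hψC : ContDiff ℝ 1 ψ)
    (hM₁ : ∀ x ∈ Icc t₀ T, |deriv ψ x| ≤ M₁)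
    (hh : ContinuousOn h (Icc t₀ T)) (hM : ∀ x ∈ Icc t₀ T, |h x| ≤ M)
    (hslope : ∀ u ∈ Icc t₀ T, ∀ t ∈ Icc t₀ T, u ≤ t → m * (t - u) ≤ ψ t - ψ u)
    (hT : T ∈ Icc t₀ T)
    (τ : ℝ) (hτ : τ ∈ Icc t₀ T) (a b : ℝ) (ha : a ∈ Icc t₀ τ) (hb : b ∈ Icc t₀ τ) :
    IntervalIntegrable (fun u => deriv ψ u * (ψ τ - ψ u) ^ (α - 1) * h u) volume a b := by
  have hψcont : Continuous ψ := hψC.continuous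
  have hψ'cont : Continuous (deriv ψ) := hψC.continuous_deriv le_rfl
  have hsub' : Ι a b ⊆ Icc t₀ τ :=
    (uIoc_subset_uIcc ..).trans (uIcc_subset_Icc ha hb)
  have hsub : Ι a b ⊆ Icc t₀ T :=
    hsub'.trans (Icc_subset_Icc le_rfl hτ.2)
  -- dominating function
  have hbase : IntervalIntegrable (fun x : ℝ => x ^ (α - 1)) volume (τ - a) (τ - b) :=
    intervalIntegrable_rpow' (by linarith)
  have hdom : IntervalIntegrable (fun u => (M₁ * M * m ^ (α - 1)) * (τ - u) ^ (α - 1)) volume a b := by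
    have := (hbase.comp_sub_left τ).const_mul (M₁ * M * m ^ (α - 1))
    simpa using this
  apply hdom.mono_fun
  · have hns : volume (Ι a b ∩ {τ}) = 0 :=
      measure_mono_null inter_subset_right (measure_singleton τ)
    have hae : (Ι a b \ {τ} : Set ℝ) =ᵐ[volume] (Ι a b : Set ℝ) := diff_ae_eq_self.2 hns
    rw [← Measure.restrict_congr_set hae]
    apply ContinuousOn.aestronglyMeasurable ?_
      (measurableSet_uIoc.diff (measurableSet_singleton _))
    apply ContinuousOn.mul ?_ (hh.mono (diff_subset.trans hsub))
    apply ContinuousOn.mul (hψ'cont.continuousOn)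
    apply ContinuousOn.rpow_const ((continuous_const.sub hψcont).continuousOn)
    intro x hx
    left
    have hxτ : x < τ := lt_of_le_of_ne (hsub' hx.1).2 (fun e => hx.2 e)
    have := hslope x (hsub hx.1) τ hτ hxτ.le
    have : 0 < ψ τ - ψ x := lt_of_lt_of_le (mul_pos hm0 (by linarith)) this
    exact ne_of_gt this
  · have hne : ∀ᵐ u ∂(volume.restrict (Ι a b)), u ≠ τ := by
      refine ae_restrict_of_ae ?_
      rw [ae_iff]
      simpa using measure_singleton (μ := volume) τ
    filter_upwards [hne, ae_restrict_mem measurableSet_uIoc] with u hu hmem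
    have huI : u ∈ Icc t₀ T := hsub hmem
    have huτ : u < τ := lt_of_le_of_ne (hsub' hmem).2 hu
    have hkey : m * (τ - u) ≤ ψ τ - ψ u := hslope u huI τ hτ huτ.le
    have hpos : 0 < m * (τ - u) := mul_pos hm0 (by linarith)
    have h1 : (ψ τ - ψ u) ^ (α - 1) ≤ (m * (τ - u)) ^ (α - 1) :=
      Real.rpow_le_rpow_of_nonpos hpos hkey (by linarith)
    have h0' : (0:ℝ) ≤ ψ τ - ψ u := le_trans hpos.le hkey
    have hM₁u := hM₁ u huI
    have hMu := hM u huI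
    have hM₁0 : (0:ℝ) ≤ M₁ := le_trans (abs_nonneg _) hM₁u
    have hM0 : (0:ℝ) ≤ M := le_trans (abs_nonneg _) hMu
    calc ‖deriv ψ u * (ψ τ - ψ u) ^ (α - 1) * h u‖
        = |deriv ψ u| * (ψ τ - ψ u) ^ (α - 1) * |h u| := by
          rw [norm_mul, norm_mul, Real.norm_eq_abs, Real.norm_eq_abs, Real.norm_eq_abs,
            abs_of_nonneg (Real.rpow_nonneg h0' _)]
      _ ≤ M₁ * (m * (τ - u)) ^ (α - 1) * M := by
          exact mul_le_mul (mul_le_mul hM₁u h1 (Real.rpow_nonneg h0' _) hM₁0) hMu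
            (abs_nonneg _) (mul_nonneg hM₁0 (Real.rpow_nonneg hpos.le _))
      _ = ‖M₁ * M * m ^ (α - 1) * (τ - u) ^ (α - 1)‖ := by
          rw [Real.mul_rpow hm0.le (by linarith), Real.norm_eq_abs,
            abs_of_nonneg (mul_nonneg (mul_nonneg (mul_nonneg hM₁0 hM0)
              (Real.rpow_nonneg hm0.le _)) (Real.rpow_nonneg (by linarith) _))]
          ring

lemma aux_exact (t₀ T m M₁ α : ℝ) (hm0 : 0 < m) (hα0 : 0 < α) (hα1 : α ≤ 1)
    (ψ : ℝ → ℝ) (hψC : ContDiff ℝ 1 ψ) (hψmono : StrictMono ψ)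
    (hM₁ : ∀ x ∈ Icc t₀ T, |deriv ψ x| ≤ M₁)
    (hslope : ∀ u ∈ Icc t₀ T, ∀ t ∈ Icc t₀ T, u ≤ t → m * (t - u) ≤ ψ t - ψ u)
    (τ : ℝ) (hτ : τ ∈ Icc t₀ T) (a b : ℝ) (ha : a ∈ Icc t₀ τ) (hb : b ∈ Icc t₀ τ)
    (hab : a ≤ b) :
    ∫ u in a..b, deriv ψ u * (ψ τ - ψ u) ^ (α - 1)
      = ((ψ τ - ψ a) ^ α - (ψ τ - ψ b) ^ α) / α := by
  have hbτ : b ≤ τ := hb.2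
  have h1 : ∫ u in a..b, ((fun s => (ψ τ - s) ^ (α - 1)) ∘ ψ) u * deriv ψ u
      = ∫ s in ψ a..ψ b, (ψ τ - s) ^ (α - 1) := by
    apply intervalIntegral.integral_comp_mul_deriv''' (hψC.continuous.continuousOn)
    · intro x _
      exact ((hψC.differentiable one_ne_zero).differentiableAt.hasDerivAt).hasDerivWithinAt
    · apply ContinuousOn.rpow_const ((continuous_const.sub continuous_id).continuousOn)
      rintro s ⟨x, hx, rfl⟩
      left
      have hxb : x < b := by
        have := hx.2
        rwa [max_eq_right hab] at this
      have hlt : ψ x < ψ τ := hψmono (lt_of_lt_of_le hxb hbτ)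
      simp only [Pi.sub_apply, id]
      intro hcon
      exact absurd hcon (by linarith)
    · have hio : IntervalIntegrable (fun s => (ψ τ - s) ^ (α - 1)) volume (ψ a) (ψ b) := by
        have := (intervalIntegrable_rpow' (r := α - 1) (a := ψ τ - ψ a) (b := ψ τ - ψ b)
          (by linarith)).comp_sub_left (ψ τ)
        simpa using this
      apply ((intervalIntegrable_iff' (by finiteness)).mp hio).mono_set
      rintro s ⟨x, hx, rfl⟩
      rw [uIcc_of_le hab] at hx
      rw [uIcc_of_le (hψmono.monotone hab)]
      exact ⟨hψmono.monotone hx.1, hψmono.monotone hx.2⟩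
    · have hone : ∀ x ∈ Icc t₀ T, |(1:ℝ)| ≤ (1:ℝ) := fun x _ => by norm_num
      have := aux_integrable t₀ T m M₁ 1 α hm0 hα0 hα1 ψ (fun _ => 1) hψC hM₁
        continuousOn_const hone hslope ⟨le_trans ha.1 (le_trans ha.2 hτ.2), le_rfl⟩
        τ hτ a b ha hb
      replace this := (intervalIntegrable_iff' (by finiteness)).mp this
      exact this.congr_fun (fun x _ => by simp [mul_comm]) measurableSet_uIcc
  have h2 : ∫ u in a..b, deriv ψ u * (ψ τ - ψ u) ^ (α - 1)
      = ∫ u in a..b, ((fun s => (ψ τ - s) ^ (α - 1)) ∘ ψ) u * deriv ψ u :=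
    intervalIntegral.integral_congr (fun x _ => mul_comm _ _)
  rw [h2, h1, intervalIntegral.integral_comp_sub_left (fun x => x ^ (α - 1)) (ψ τ),
    integral_rpow (Or.inl (by linarith : (-1:ℝ) < α - 1))]
  have hαe : α - 1 + 1 = α := by ring
  rw [hαe]

/-- Continuity of the ψ-Riemann–Liouville fractional integral of order `α` of a
continuous function (asserted in the proof of Theorem 2 of the paper). -/
theorem psi_riemann_liouville_integral_continuousOn
    (t₀ T : ℝ) (htT : t₀ < T) (α : ℝ) (hα0 : 0 < α) (hα1 : α ≤ 1)
    (ψ : ℝ → ℝ) (hψC : ContDiff ℝ 1 ψ) (hψmono : StrictMono ψ)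
    (hψ' : ∀ t ∈ Icc t₀ T, 0 < deriv ψ t)
    (g : ℝ → ℝ) (hg : ContinuousOn g (Icc t₀ T)) :
    ContinuousOn
      (fun t => (1 / Real.Gamma α) *
        ∫ u in t₀..t, deriv ψ u * (ψ t - ψ u) ^ (α - 1) * g u)
      (Icc t₀ T) := by
  have hψcont : Continuous ψ := hψC.continuous
  have hψ'cont : Continuous (deriv ψ) := hψC.continuous_deriv le_rfl
  have hTm : T ∈ Icc t₀ T := ⟨htT.le, le_rfl⟩
  obtain ⟨M, hM'⟩ := isCompact_Icc.exists_bound_of_continuousOn hg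
  have hM : ∀ x ∈ Icc t₀ T, |g x| ≤ M := by simpa [Real.norm_eq_abs] using hM'
  have hM0 : (0:ℝ) ≤ M := le_trans (abs_nonneg _) (hM t₀ ⟨le_rfl, htT.le⟩)
  obtain ⟨M₁, hM₁'⟩ := isCompact_Icc.exists_bound_of_continuousOn
    (hψ'cont.continuousOn (s := Icc t₀ T))
  have hM₁ : ∀ x ∈ Icc t₀ T, |deriv ψ x| ≤ M₁ := by simpa [Real.norm_eq_abs] using hM₁'
  obtain ⟨u₀, hu₀, hmin⟩ := isCompact_Icc.exists_isMinOn (nonempty_Icc.mpr htT.le)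
    hψ'cont.continuousOn
  set m := deriv ψ u₀ with hm_def
  have hm0 : 0 < m := hψ' u₀ hu₀
  have hm : ∀ x ∈ Icc t₀ T, m ≤ deriv ψ x := fun x hx => hmin hx
  have hslope := aux_slope t₀ T m ψ hψC hm
  set G : ℝ → ℝ := fun t => ∫ u in t₀..t, deriv ψ u * (ψ t - ψ u) ^ (α - 1) * g u with hGdef
  have hΓ : 0 < Real.Gamma α := Real.Gamma_pos_of_pos hα0
  have P : ∀ τ ∈ Icc t₀ T, ∀ a ∈ Icc t₀ τ, ∀ b ∈ Icc t₀ τ,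
      IntervalIntegrable (fun u => deriv ψ u * (ψ τ - ψ u) ^ (α - 1)) volume a b := by
    intro τ hτ a ha' b hb'
    have := aux_integrable t₀ T m M₁ 1 α hm0 hα0 hα1 ψ (fun _ => 1) hψC hM₁
      continuousOn_const (fun x _ => by norm_num) hslope hTm τ hτ a b ha' hb'
    simpa using this
  have key : ∀ t ∈ Icc t₀ T, ∀ t' ∈ Icc t₀ T, t ≤ t' →
      |G t' - G t| ≤ 2 * M / α * (ψ t' - ψ t) ^ α := by
    intro t ht t' ht' htt'
    have h0t : t₀ ≤ t := ht.1
    have h0t' : t ∈ Icc t₀ t' := ⟨h0t, htt'⟩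
    have ht₀t' : t₀ ∈ Icc t₀ t' := ⟨le_rfl, le_trans h0t htt'⟩
    have ht₀t : t₀ ∈ Icc t₀ t := ⟨le_rfl, h0t⟩
    have htt : t ∈ Icc t₀ t := ⟨h0t, le_rfl⟩
    have ht't'2 : t' ∈ Icc t₀ t' := ⟨ht'.1, le_rfl⟩
    have I1 : IntervalIntegrable (fun u => deriv ψ u * (ψ t' - ψ u) ^ (α - 1) * g u) volume t₀ t :=
      aux_integrable t₀ T m M₁ M α hm0 hα0 hα1 ψ g hψC hM₁ hg hM hslope hTm t' ht' t₀ t ht₀t' h0t'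
    have I2 : IntervalIntegrable (fun u => deriv ψ u * (ψ t' - ψ u) ^ (α - 1) * g u) volume t t' :=
      aux_integrable t₀ T m M₁ M α hm0 hα0 hα1 ψ g hψC hM₁ hg hM hslope hTm t' ht' t t' h0t' ht't'2
    have I3 : IntervalIntegrable (fun u => deriv ψ u * (ψ t - ψ u) ^ (α - 1) * g u) volume t₀ t :=
      aux_integrable t₀ T m M₁ M α hm0 hα0 hα1 ψ g hψC hM₁ hg hM hslope hTm t ht t₀ t ht₀t htt
    have hψt : ψ t ≤ ψ t' := hψmono.monotone htt'
    have hψ0 : ψ t₀ ≤ ψ t := hψmono.monotone h0t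
    have hsplit : G t' - G t =
        (∫ u in t₀..t, (deriv ψ u * (ψ t' - ψ u) ^ (α - 1) * g u
          - deriv ψ u * (ψ t - ψ u) ^ (α - 1) * g u))
        + ∫ u in t..t', deriv ψ u * (ψ t' - ψ u) ^ (α - 1) * g u := by
      have hadd := intervalIntegral.integral_add_adjacent_intervals I1 I2
      have hsub := intervalIntegral.integral_sub I1 I3
      simp only [hGdef]
      rw [hsub]
      linarith [hadd]
    have B1 : |∫ u in t..t', deriv ψ u * (ψ t' - ψ u) ^ (α - 1) * g u|
        ≤ M / α * (ψ t' - ψ t) ^ α := by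
      have hint : IntervalIntegrable (fun u => M * (deriv ψ u * (ψ t' - ψ u) ^ (α - 1)))
          volume t t' := (P t' ht' t h0t' t' ht't'2).const_mul M
      have hb := intervalIntegral.norm_integral_le_abs_of_norm_le (μ := volume)
        (f := fun u => deriv ψ u * (ψ t' - ψ u) ^ (α - 1) * g u) ?_ hint
      · rw [intervalIntegral.integral_const_mul,
          aux_exact t₀ T m M₁ α hm0 hα0 hα1 ψ hψC hψmono hM₁ hslope t' ht' t t' h0t' ht't'2 htt',
          sub_self, Real.zero_rpow hα0.ne', sub_zero] at hb
        rw [Real.norm_eq_abs] at hb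
        calc |∫ u in t..t', deriv ψ u * (ψ t' - ψ u) ^ (α - 1) * g u|
            ≤ |M * ((ψ t' - ψ t) ^ α / α)| := hb
          _ = M / α * (ψ t' - ψ t) ^ α := by
              rw [abs_of_nonneg (mul_nonneg hM0 (div_nonneg
                (Real.rpow_nonneg (sub_nonneg.mpr hψt) _) hα0.le))]
              ring
      · have hmem := MeasureTheory.ae_restrict_mem (μ := volume) (measurableSet_uIoc (a := t) (b := t'))
        filter_upwards [hmem] with u hu
        rw [uIoc_of_le htt'] at hu
        have huI : u ∈ Icc t₀ T := ⟨le_trans h0t hu.1.le, le_trans hu.2 ht'.2⟩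
        have hψ'u : 0 < deriv ψ u := hψ' u huI
        have hbase : 0 ≤ ψ t' - ψ u := sub_nonneg.mpr (hψmono.monotone hu.2)
        rw [norm_mul, norm_mul, Real.norm_eq_abs, Real.norm_eq_abs, Real.norm_eq_abs,
          abs_of_pos hψ'u, abs_of_nonneg (Real.rpow_nonneg hbase _)]
        calc deriv ψ u * (ψ t' - ψ u) ^ (α - 1) * |g u|
            ≤ deriv ψ u * (ψ t' - ψ u) ^ (α - 1) * M := by
              apply mul_le_mul_of_nonneg_left (hM u huI)
              exact mul_nonneg hψ'u.le (Real.rpow_nonneg hbase _)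
          _ = M * (deriv ψ u * (ψ t' - ψ u) ^ (α - 1)) := by ring
    have B2 : |∫ u in t₀..t, (deriv ψ u * (ψ t' - ψ u) ^ (α - 1) * g u
        - deriv ψ u * (ψ t - ψ u) ^ (α - 1) * g u)|
        ≤ M / α * (ψ t' - ψ t) ^ α := by
      have hPt := P t ht t₀ ht₀t t htt
      have hPt' : IntervalIntegrable (fun u => deriv ψ u * (ψ t' - ψ u) ^ (α - 1)) volume t₀ t :=
        P t' ht' t₀ ht₀t' t h0t'
      have hint : IntervalIntegrable (fun u => M * (deriv ψ u * (ψ t - ψ u) ^ (α - 1)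
          - deriv ψ u * (ψ t' - ψ u) ^ (α - 1))) volume t₀ t := (hPt.sub hPt').const_mul M
      have hb := intervalIntegral.norm_integral_le_abs_of_norm_le (μ := volume)
        (f := fun u => deriv ψ u * (ψ t' - ψ u) ^ (α - 1) * g u
          - deriv ψ u * (ψ t - ψ u) ^ (α - 1) * g u) ?_ hint
      · have hval : (∫ u in t₀..t, M * (deriv ψ u * (ψ t - ψ u) ^ (α - 1)
            - deriv ψ u * (ψ t' - ψ u) ^ (α - 1)))
            = M * (((ψ t - ψ t₀) ^ α - 0) / α - ((ψ t' - ψ t₀) ^ α - (ψ t' - ψ t) ^ α) / α) := by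
          rw [intervalIntegral.integral_const_mul, intervalIntegral.integral_sub hPt hPt',
            aux_exact t₀ T m M₁ α hm0 hα0 hα1 ψ hψC hψmono hM₁ hslope t ht t₀ t ht₀t htt h0t,
            aux_exact t₀ T m M₁ α hm0 hα0 hα1 ψ hψC hψmono hM₁ hslope t' ht' t₀ t ht₀t' h0t' h0t,
            sub_self, Real.zero_rpow hα0.ne']
        have hnn : 0 ≤ ∫ u in t₀..t, M * (deriv ψ u * (ψ t - ψ u) ^ (α - 1)
            - deriv ψ u * (ψ t' - ψ u) ^ (α - 1)) := by
          apply intervalIntegral.integral_nonneg_of_ae_restrict h0t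
          have hmem := MeasureTheory.ae_restrict_mem (μ := volume)
            (measurableSet_Icc (a := t₀) (b := t))
          have hne : ∀ᵐ u ∂(volume.restrict (Icc t₀ t)), u ≠ t := by
            refine MeasureTheory.ae_restrict_of_ae ?_
            rw [MeasureTheory.ae_iff]
            simpa using MeasureTheory.measure_singleton (μ := volume) t
          filter_upwards [hmem, hne] with u hu hut
          have hult : u < t := lt_of_le_of_ne hu.2 hut
          have huI : u ∈ Icc t₀ T := ⟨hu.1, le_trans hu.2 ht.2⟩
          have hψ'u : 0 < deriv ψ u := hψ' u huI
          have h1 : 0 < ψ t - ψ u := sub_pos.mpr (hψmono hult)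
          have h2 : ψ t - ψ u ≤ ψ t' - ψ u := by linarith
          have h3 : (ψ t' - ψ u) ^ (α - 1) ≤ (ψ t - ψ u) ^ (α - 1) :=
            Real.rpow_le_rpow_of_nonpos h1 h2 (by linarith)
          have : 0 ≤ deriv ψ u * (ψ t - ψ u) ^ (α - 1)
              - deriv ψ u * (ψ t' - ψ u) ^ (α - 1) := by
            apply sub_nonneg.mpr
            exact mul_le_mul_of_nonneg_left h3 hψ'u.le
          exact mul_nonneg hM0 this
        rw [hval] at hb hnn
        rw [Real.norm_eq_abs] at hb
        have hmono2 : (ψ t - ψ t₀) ^ α ≤ (ψ t' - ψ t₀) ^ α :=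
          Real.rpow_le_rpow (by linarith) (by linarith) hα0.le
        calc |∫ u in t₀..t, (deriv ψ u * (ψ t' - ψ u) ^ (α - 1) * g u
              - deriv ψ u * (ψ t - ψ u) ^ (α - 1) * g u)|
            ≤ |M * (((ψ t - ψ t₀) ^ α - 0) / α - ((ψ t' - ψ t₀) ^ α - (ψ t' - ψ t) ^ α) / α)| :=
              hb
          _ = M * (((ψ t - ψ t₀) ^ α - 0) / α - ((ψ t' - ψ t₀) ^ α - (ψ t' - ψ t) ^ α) / α) :=
              abs_of_nonneg hnn
          _ ≤ M / α * (ψ t' - ψ t) ^ α := by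
              have h6 : ((ψ t - ψ t₀) ^ α - 0) / α - ((ψ t' - ψ t₀) ^ α - (ψ t' - ψ t) ^ α) / α
                  = ((ψ t - ψ t₀) ^ α - (ψ t' - ψ t₀) ^ α + (ψ t' - ψ t) ^ α) / α := by
                ring
              have h7 : ((ψ t - ψ t₀) ^ α - 0) / α - ((ψ t' - ψ t₀) ^ α - (ψ t' - ψ t) ^ α) / α
                  ≤ (ψ t' - ψ t) ^ α / α := by
                rw [h6]
                exact (div_le_div_iff_of_pos_right hα0).mpr (by linarith [hmono2])
              calc M * (((ψ t - ψ t₀) ^ α - 0) / α - ((ψ t' - ψ t₀) ^ α - (ψ t' - ψ t) ^ α) / α)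
                  ≤ M * ((ψ t' - ψ t) ^ α / α) := mul_le_mul_of_nonneg_left h7 hM0
                _ = M / α * (ψ t' - ψ t) ^ α := by ring
      · have hmem := MeasureTheory.ae_restrict_mem (μ := volume)
          (measurableSet_uIoc (a := t₀) (b := t))
        have hne : ∀ᵐ u ∂(volume.restrict (Ι t₀ t)), u ≠ t := by
          refine MeasureTheory.ae_restrict_of_ae ?_
          rw [MeasureTheory.ae_iff]
          simpa using MeasureTheory.measure_singleton (μ := volume) t
        filter_upwards [hmem, hne] with u hu hut
        rw [uIoc_of_le h0t] at hu
        have hult : u < t := lt_of_le_of_ne hu.2 hut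
        have huI : u ∈ Icc t₀ T := ⟨hu.1.le, le_trans hu.2 ht.2⟩
        have hψ'u : 0 < deriv ψ u := hψ' u huI
        have h1 : 0 < ψ t - ψ u := sub_pos.mpr (hψmono hult)
        have h2 : ψ t - ψ u ≤ ψ t' - ψ u := by linarith
        have h3 : (ψ t' - ψ u) ^ (α - 1) ≤ (ψ t - ψ u) ^ (α - 1) :=
          Real.rpow_le_rpow_of_nonpos h1 h2 (by linarith)
        have h4 : 0 ≤ (ψ t' - ψ u) ^ (α - 1) := Real.rpow_nonneg (by linarith) _
        rw [Real.norm_eq_abs]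
        have hgu := hM u huI
        calc |deriv ψ u * (ψ t' - ψ u) ^ (α - 1) * g u
              - deriv ψ u * (ψ t - ψ u) ^ (α - 1) * g u|
            = deriv ψ u * ((ψ t - ψ u) ^ (α - 1) - (ψ t' - ψ u) ^ (α - 1)) * |g u| := by
              rw [show deriv ψ u * (ψ t' - ψ u) ^ (α - 1) * g u
                  - deriv ψ u * (ψ t - ψ u) ^ (α - 1) * g u
                  = -(deriv ψ u * ((ψ t - ψ u) ^ (α - 1) - (ψ t' - ψ u) ^ (α - 1)) * g u) by ring,
                abs_neg, abs_mul]
              congr 1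
              exact abs_of_nonneg (mul_nonneg hψ'u.le (by linarith))
          _ ≤ deriv ψ u * ((ψ t - ψ u) ^ (α - 1) - (ψ t' - ψ u) ^ (α - 1)) * M := by
              apply mul_le_mul_of_nonneg_left hgu
              exact mul_nonneg hψ'u.le (by linarith)
          _ = M * (deriv ψ u * (ψ t - ψ u) ^ (α - 1)
              - deriv ψ u * (ψ t' - ψ u) ^ (α - 1)) := by ring
    calc |G t' - G t| ≤ M / α * (ψ t' - ψ t) ^ α + M / α * (ψ t' - ψ t) ^ α := by
          rw [hsplit]
          exact le_trans (abs_add_le _ _) (add_le_add B2 B1)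
      _ = 2 * M / α * (ψ t' - ψ t) ^ α := by ring
  rw [Metric.continuousOn_iff]
  intro t ht ε hε
  set c := 1 / Real.Gamma α * (2 * M / α) with hc_def
  have hc0 : 0 ≤ c := by positivity
  have hcont : ContinuousAt (fun y => c * |ψ y - ψ t| ^ α) t := by
    apply ContinuousAt.mul continuousAt_const
    exact (Real.continuousAt_rpow_const _ α (Or.inr hα0.le)).comp
      ((hψcont.sub continuous_const).abs.continuousAt)
  have hval : c * |ψ t - ψ t| ^ α = 0 := by
    simp [Real.zero_rpow hα0.ne']
  have hev : ∀ᶠ y in nhds t, c * |ψ y - ψ t| ^ α < ε := by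
    have htd : Filter.Tendsto (fun y => c * |ψ y - ψ t| ^ α) (nhds t) (nhds 0) := by
      simpa [sub_self, abs_zero, Real.zero_rpow hα0.ne'] using hcont.tendsto
    exact htd (Iio_mem_nhds hε)
  obtain ⟨δ, hδ0, hδ⟩ := Metric.eventually_nhds_iff.mp hev
  refine ⟨δ, hδ0, fun y hy hdist => ?_⟩
  have hbound : |G y - G t| ≤ 2 * M / α * |ψ y - ψ t| ^ α := by
    rcases le_total t y with hty | hyt
    · have hk := key t ht y hy hty
      rw [abs_of_nonneg (sub_nonneg.mpr (hψmono.monotone hty))]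
      exact hk
    · have hk := key y hy t ht hyt
      rw [abs_sub_comm (ψ y) (ψ t), abs_of_nonneg (sub_nonneg.mpr (hψmono.monotone hyt)),
        abs_sub_comm (G y) (G t)]
      exact hk
  have hGam : |1 / Real.Gamma α| = 1 / Real.Gamma α := abs_of_pos (by positivity)
  have hdy : dist (1 / Real.Gamma α * G y) (1 / Real.Gamma α * G t)
      ≤ c * |ψ y - ψ t| ^ α := by
    rw [Real.dist_eq, ← mul_sub, abs_mul, hGam, hc_def, mul_assoc]
    apply mul_le_mul_of_nonneg_left hbound (by positivity)
  calc dist (1 / Real.Gamma α * G y) (1 / Real.Gamma α * G t)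
      ≤ c * |ψ y - ψ t| ^ α := hdy
    _ < ε := hδ hdist
end
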